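/- Let q be a positive integer, let z_1,…,z_q be i.i.d. random variables each uniformly distributed over {+1, −1}, and let a_1 ≥ a_2 ≥ … ≥ a_q > 0 be real constants. For i = 1,…,q define p_i := Pr(−a_1 ≤ a_1·Σ_{j=1}^i z_j + (a_1/a_i)·Σ_{j=i+1}^q a_j z_j < a_1). Then p_i is monotone decreasing in i, i.e., p_i ≥ p_{i+1} for every i ∈ {1,…,q−1}. -/

import Mathlib

open Finset
open scoped Classical

/-- Interpretation of a Boolean as `±1 ∈ ℝ`. -/
def pm (b : Bool) : ℝ := if b then 1 else -1

/-- The random quantity `a_1·Σ_{j=1}^{i} z_j + (a_1/a_i)·Σ_{j=i+1}^{q} a_j z_j`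
(indices `0`-based: `a 0` plays the role of `a_1`). -/
noncomputable def Tsum (q : ℕ) [NeZero q] (a : Fin q → ℝ) (i : Fin q)
    (z : Fin q → Bool) : ℝ :=
  a 0 * (∑ j ∈ Finset.univ.filter (fun j => j ≤ i), pm (z j)) +
    (a 0 / a i) * (∑ j ∈ Finset.univ.filter (fun j => i < j), a j * pm (z j))

/-- `p_i = Pr(−a_1 ≤ a_1·Σ_{j=1}^{i} z_j + (a_1/a_i)·Σ_{j=i+1}^{q} a_j z_j < a_1)`, the
proportion of sign vectors `z ∈ {+1,−1}^q` satisfying the two inequalities. -/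
noncomputable def pseq (q : ℕ) [NeZero q] (a : Fin q → ℝ) (i : Fin q) : ℝ :=
  ((Finset.univ.filter (fun z : Fin q → Bool =>
      -(a 0) ≤ Tsum q a i z ∧ Tsum q a i z < a 0)).card : ℝ) / 2 ^ q

lemma choose_step (m k : ℕ) (h : 2*k+1 ≤ m) : m.choose k ≤ m.choose (k+1) := by
  rcases Nat.lt_or_ge (2*k+1) m with h2 | h2
  · exact Nat.choose_le_succ_of_lt_half_left (by omega)
  · have hm : m = 2*k+1 := le_antisymm h2 h
    subst hm
    have hs := Nat.choose_symm (show k+1 ≤ 2*k+1 by omega)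
    rw [show 2*k+1-(k+1) = k by omega] at hs
    exact le_of_eq hs

lemma choose_mono_left (m : ℕ) : ∀ b a : ℕ, a ≤ b → 2*b ≤ m → m.choose a ≤ m.choose b := by
  intro b
  induction b with
  | zero =>
    intro a ha _
    have : a = 0 := by omega
    subst this; exact le_refl _
  | succ b ih =>
    intro a ha hm
    rcases Nat.lt_or_ge a (b+1) with h | h
    · calc m.choose a ≤ m.choose b := ih a (by omega) (by omega)
        _ ≤ m.choose (b+1) := choose_step m b (by omega)
    · have : a = b+1 := by omega
      subst this; exact le_refl _

lemma choose_mono' (m a b : ℕ) (ha : a ≤ b) (hab : a + b ≤ m) :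
    m.choose a ≤ m.choose b := by
  rcases Nat.lt_or_ge m (2*b) with h | h
  · have hb : b ≤ m := by omega
    rw [← Nat.choose_symm hb]
    exact choose_mono_left m (m - b) a (by omega) (by omega)
  · exact choose_mono_left m b a ha h

lemma choose_center (m n n' : ℕ) (hn : n ≤ m) (hn' : n' ≤ m)
    (h : |2*(n':ℤ) - m| ≤ |2*(n:ℤ) - m|) : m.choose n ≤ m.choose n' := by
  have hx := abs_le.mp h
  rcases abs_cases (2*(n:ℤ) - m) with ⟨he, _⟩ | ⟨he, _⟩ <;> rw [he] at hx <;>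
    obtain ⟨hx1, hx2⟩ := hx <;>
    rcases Nat.lt_or_ge (2*n) m with h1 | h1 <;> rcases Nat.lt_or_ge (2*n') m with h2 | h2
  · exact choose_mono' m n n' (by omega) (by omega)
  · rw [← Nat.choose_symm hn']
    exact choose_mono' m n (m - n') (by omega) (by omega)
  · rw [← Nat.choose_symm hn]
    exact choose_mono' m (m - n) n' (by omega) (by omega)
  · rw [← Nat.choose_symm hn, ← Nat.choose_symm hn']
    exact choose_mono' m (m - n) (m - n') (by omega) (by omega)
  · exact choose_mono' m n n' (by omega) (by omega)
  · rw [← Nat.choose_symm hn']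
    exact choose_mono' m n (m - n') (by omega) (by omega)
  · rw [← Nat.choose_symm hn]
    exact choose_mono' m (m - n) n' (by omega) (by omega)
  · rw [← Nat.choose_symm hn, ← Nat.choose_symm hn']
    exact choose_mono' m (m - n) (m - n') (by omega) (by omega)

/-- Key movement lemma: scaling the shift toward 0 moves the admissible
integer (of fixed parity) closer to 0 in absolute value. -/
lemma kmove (b x : ℝ) (hb : 0 < b) (hb1 : b ≤ 1) (k k' : ℤ) (hpar : (2:ℤ) ∣ (k - k'))
    (hk1 : -1 ≤ (k:ℝ) + x) (hk2 : (k:ℝ) + x < 1)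
    (hk1' : -1 ≤ (k':ℝ) + b*x) (hk2' : (k':ℝ) + b*x < 1) :
    |k'| ≤ |k| := by
  rcases le_or_gt 0 x with hx | hx
  · -- x ≥ 0 : then b*x ≤ x, both k, k' ≤ 0, and k ≤ k'
    have hbx0 : 0 ≤ b*x := mul_nonneg hb.le hx
    have hbx : b*x ≤ x := by nlinarith
    have hk0 : k ≤ 0 := by
      have : (k:ℝ) < 1 := by linarith
      exact_mod_cast Int.lt_add_one_iff.mp (by exact_mod_cast this)
    have hk0' : k' ≤ 0 := by
      have : (k':ℝ) < 1 := by linarith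
      exact_mod_cast Int.lt_add_one_iff.mp (by exact_mod_cast this)
    have hkk : k ≤ k' := by
      by_contra hc
      push_neg at hc
      have h2 : k' ≤ k - 2 := by omega
      have : ((k':ℤ):ℝ) ≤ ((k - 2 : ℤ):ℝ) := by exact_mod_cast h2
      push_cast at this
      linarith
    rw [abs_of_nonpos hk0, abs_of_nonpos hk0']
    omega
  · -- x < 0 : then x ≤ b*x ≤ 0, k ≥ 0, k' ≥ -1, k' ≤ k
    have hbx : x ≤ b*x := by nlinarith
    have hbx0 : b*x ≤ 0 := by nlinarith
    have hk0 : 0 ≤ k := by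
      have h' : (-1:ℤ) < k := by exact_mod_cast (show ((-1:ℤ):ℝ) < k by push_cast; linarith)
      omega
    have hk0' : -1 ≤ k' := by
      have h' : (-2:ℤ) < k' := by exact_mod_cast (show ((-2:ℤ):ℝ) < k' by push_cast; linarith)
      omega
    have hkk : k' ≤ k := by
      by_contra hc
      push_neg at hc
      have h2 : k + 2 ≤ k' := by omega
      have : ((k + 2 : ℤ):ℝ) ≤ ((k':ℤ):ℝ) := by exact_mod_cast h2
      push_cast at this
      linarith
    rw [abs_of_nonneg hk0]
    rcases le_or_gt 0 k' with h | h
    · rw [abs_of_nonneg h]; omega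
    · rw [abs_of_neg h]; omega

/-- Sum of `±1` over a finset, in terms of the number of `true`s. -/
lemma sum_pm {α : Type*} [DecidableEq α] (s : Finset α) (z : α → Bool) :
    ∑ j ∈ s, (if z j then (1:ℝ) else -1) =
      2 * ((s.filter (fun j => z j = true)).card : ℝ) - s.card := by
  induction s using Finset.induction_on with
  | empty => simp
  | insert a s hx ih =>
    rw [Finset.sum_insert hx, ih, Finset.filter_insert, Finset.card_insert_of_notMem hx]
    by_cases h : z a = true
    · rw [if_pos h, if_pos h, Finset.card_insert_of_notMem (by simp [hx])]
      push_cast; ring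
    · rw [if_neg h, if_neg (by simpa using h)]
      push_cast; ring

/-- Central counting inequality: among subsets `A ⊆ s`, the number with
`2|A| - |s| + b·x ∈ [-1,1)` is at least the number with `2|A| - |s| + x ∈ [-1,1)`. -/
lemma powfilter_le {ι : Type*} [DecidableEq ι] (s : Finset ι) (b x : ℝ)
    (hb : 0 < b) (hb1 : b ≤ 1) :
    (s.powerset.filter (fun A => -1 ≤ 2*(A.card:ℝ) - s.card + x ∧
        2*(A.card:ℝ) - s.card + x < 1)).card ≤
    (s.powerset.filter (fun A => -1 ≤ 2*(A.card:ℝ) - s.card + b*x ∧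
        2*(A.card:ℝ) - s.card + b*x < 1)).card := by
  set m := s.card with hm
  rcases (s.powerset.filter (fun A => -1 ≤ 2*(A.card:ℝ) - s.card + x ∧
      2*(A.card:ℝ) - s.card + x < 1)).eq_empty_or_nonempty with he | ⟨A₀, hA₀⟩
  · rw [he]; simp
  · rw [Finset.mem_filter, Finset.mem_powerset] at hA₀
    obtain ⟨hA₀s, hc1, hc2⟩ := hA₀
    set n := A₀.card with hn
    have hnm : n ≤ m := Finset.card_le_card hA₀s
    -- LHS ⊆ powersetCard n s
    have hsub : (s.powerset.filter (fun A => -1 ≤ 2*(A.card:ℝ) - s.card + x ∧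
        2*(A.card:ℝ) - s.card + x < 1)) ⊆ Finset.powersetCard n s := by
      intro A hA
      rw [Finset.mem_filter, Finset.mem_powerset] at hA
      obtain ⟨hAs, hd1, hd2⟩ := hA
      rw [Finset.mem_powersetCard]
      refine ⟨hAs, ?_⟩
      have hlt1 : ((A.card:ℤ):ℝ) < ((n:ℤ):ℝ) + 1 := by push_cast; linarith
      have hlt2 : ((n:ℤ):ℝ) - 1 < ((A.card:ℤ):ℝ) := by push_cast; linarith
      have h1 : (A.card:ℤ) < (n:ℤ) + 1 := by exact_mod_cast hlt1
      have h2 : (n:ℤ) - 1 < (A.card:ℤ) := by exact_mod_cast hlt2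
      omega
    have hL : (s.powerset.filter (fun A => -1 ≤ 2*(A.card:ℝ) - s.card + x ∧
        2*(A.card:ℝ) - s.card + x < 1)).card ≤ m.choose n :=
      (Finset.card_le_card hsub).trans (le_of_eq (Finset.card_powersetCard n s))
    -- construct the target cardinality n'
    set n'i : ℤ := ⌈((m:ℝ) - 1 - b*x)/2⌉ with hn'i
    have hc1' : -1 ≤ 2*(n'i:ℝ) - m + b*x := by
      have := Int.le_ceil (((m:ℝ) - 1 - b*x)/2)
      rw [← hn'i] at this
      linarith
    have hc2' : 2*(n'i:ℝ) - m + b*x < 1 := by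
      have := Int.ceil_lt_add_one (((m:ℝ) - 1 - b*x)/2)
      rw [← hn'i] at this
      linarith
    have habs : |2*n'i - (m:ℤ)| ≤ |2*(n:ℤ) - m| := by
      apply kmove b x hb hb1 (2*(n:ℤ) - m) (2*n'i - m) (by ring_nf; omega)
      · push_cast; linarith
      · push_cast; linarith
      · push_cast; linarith
      · push_cast; linarith
    have habsn : |2*(n:ℤ) - m| ≤ m := by
      rw [abs_le]; omega
    have hn'0 : 0 ≤ n'i ∧ n'i ≤ m := by
      have := habs.trans habsn
      rw [abs_le] at this
      omega
    set n' : ℕ := n'i.toNat with hn'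
    have hn'c : (n' : ℤ) = n'i := Int.toNat_of_nonneg hn'0.1
    have hn'm : n' ≤ m := by omega
    -- powersetCard n' s ⊆ RHS
    have hsub2 : Finset.powersetCard n' s ⊆
        (s.powerset.filter (fun A => -1 ≤ 2*(A.card:ℝ) - s.card + b*x ∧
          2*(A.card:ℝ) - s.card + b*x < 1)) := by
      intro A hA
      rw [Finset.mem_powersetCard] at hA
      obtain ⟨hAs, hAc⟩ := hA
      rw [Finset.mem_filter, Finset.mem_powerset]
      have hAr : (A.card : ℝ) = (n'i : ℝ) := by
        rw [hAc]; exact_mod_cast congrArg (Int.cast : ℤ → ℝ) hn'c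
      refine ⟨hAs, ?_, ?_⟩ <;> rw [hAr] <;> linarith
    have hR : m.choose n' ≤ (s.powerset.filter (fun A => -1 ≤ 2*(A.card:ℝ) - s.card + b*x ∧
        2*(A.card:ℝ) - s.card + b*x < 1)).card := by
      calc m.choose n' = (Finset.powersetCard n' s).card := (Finset.card_powersetCard n' s).symm
        _ ≤ _ := Finset.card_le_card hsub2
    have hmid : m.choose n ≤ m.choose n' := by
      apply choose_center m n n' hnm hn'm
      rw [show 2*(n':ℤ) - m = 2*n'i - m by omega]
      exact habs
    exact hL.trans (hmid.trans hR)

lemma piece_card (q : ℕ) [NeZero q] (i i1 : Fin q) (hi1 : (i:ℕ)+1 = (i1:ℕ))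
    (w : Fin q → Bool) (hw : ∀ j, ¬ i1 < j → w j = false) (c : Bool) (y : ℝ) :
    (univ.filter (fun z : Fin q → Bool =>
      ((fun j => if i1 < j then z j else false) = w) ∧ z i1 = c ∧
      (-1 ≤ (∑ j ∈ univ.filter (fun j => j ≤ i), pm (z j)) + y ∧
       (∑ j ∈ univ.filter (fun j => j ≤ i), pm (z j)) + y < 1))).card
    = ((univ.filter (fun j : Fin q => j ≤ i)).powerset.filter
        (fun A => -1 ≤ 2*(A.card:ℝ) - ((univ.filter (fun j : Fin q => j ≤ i)).card:ℝ) + y ∧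
          2*(A.card:ℝ) - ((univ.filter (fun j : Fin q => j ≤ i)).card:ℝ) + y < 1)).card := by
  set s : Finset (Fin q) := univ.filter (fun j => j ≤ i) with hs
  have hmem_s : ∀ j : Fin q, j ∈ s ↔ j ≤ i := by
    intro j; simp [hs]
  have htri : ∀ j : Fin q, j ≤ i ∨ j = i1 ∨ i1 < j := by
    intro j
    rcases le_or_gt j i with h | h
    · exact Or.inl h
    · right
      rcases eq_or_lt_of_le (show i1 ≤ j by rw [Fin.le_def]; rw [Fin.lt_def] at h; omega) with h' | h'
      · exact Or.inl h'.symm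
      · exact Or.inr h'
  have hii1 : ¬ i1 ≤ i := by rw [Fin.le_def]; omega
  have hi1i1 : ¬ i1 < i1 := lt_irrefl i1
  have hsum : ∀ z : Fin q → Bool, ∑ j ∈ s, pm (z j)
      = 2 * ((s.filter (fun j => z j = true)).card : ℝ) - s.card := by
    intro z
    simpa [pm] using sum_pm s z
  apply Finset.card_bij (fun z _ => s.filter (fun j => z j = true))
  · -- maps into target
    intro z hz
    rw [Finset.mem_filter] at hz
    obtain ⟨-, htp, hzc, hcond1, hcond2⟩ := hz
    rw [Finset.mem_filter, Finset.mem_powerset]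
    refine ⟨Finset.filter_subset _ _, ?_, ?_⟩ <;> rw [← hsum z] <;> linarith
  · -- injective
    intro z₁ hz₁ z₂ hz₂ heq
    rw [Finset.mem_filter] at hz₁ hz₂
    obtain ⟨-, htp₁, hzc₁, -⟩ := hz₁
    obtain ⟨-, htp₂, hzc₂, -⟩ := hz₂
    funext j
    rcases htri j with hj | hj | hj
    · have hjs : j ∈ s := (hmem_s j).mpr hj
      have hmem := Finset.ext_iff.mp heq j
      simp only [Finset.mem_filter, hjs, true_and] at hmem
      cases h1 : z₁ j <;> cases h2 : z₂ j <;> simp [h1, h2] at hmem ⊢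
    · subst hj; rw [hzc₁, hzc₂]
    · have e₁ := congrFun htp₁ j
      have e₂ := congrFun htp₂ j
      rw [if_pos hj] at e₁ e₂
      rw [e₁, e₂]
  · -- surjective
    intro A hA
    rw [Finset.mem_filter, Finset.mem_powerset] at hA
    obtain ⟨hAs, hc1, hc2⟩ := hA
    set zA : Fin q → Bool := fun j => if j ≤ i then decide (j ∈ A) else if j = i1 then c else w j
      with hzA
    have hfilt : s.filter (fun j => zA j = true) = A := by
      ext j
      rw [Finset.mem_filter, hmem_s j]
      constructor
      · rintro ⟨hj, hj2⟩
        rw [hzA] at hj2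
        simp only [if_pos hj] at hj2
        simpa using hj2
      · intro hj
        have hji : j ≤ i := (hmem_s j).mp (hAs hj)
        refine ⟨hji, ?_⟩
        rw [hzA]
        simp only [if_pos hji]
        simpa using hj
    refine ⟨zA, ?_, hfilt⟩
    rw [Finset.mem_filter]
    refine ⟨Finset.mem_univ _, ?_, ?_, ?_, ?_⟩
    · funext j
      by_cases hj : i1 < j
      · rw [if_pos hj, hzA]
        have hji : ¬ j ≤ i := by
          rw [Fin.le_def]; rw [Fin.lt_def] at hj; omega
        have hjne : ¬ j = i1 := by
          intro h; rw [h] at hj; exact hi1i1 hj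
        simp only [if_neg hji, if_neg hjne]
      · rw [if_neg hj, hw j hj]
    · rw [hzA]; simp [hii1]
    · rw [hsum, hfilt]; linarith
    · rw [hsum, hfilt]; linarith

lemma perw (q : ℕ) [NeZero q] (a : Fin q → ℝ) (i i1 : Fin q) (hi1 : (i:ℕ)+1 = (i1:ℕ))
    (ha0 : 0 < a 0) (hai : 0 < a i) (hai1 : 0 < a i1) (hmono : a i1 ≤ a i)
    (w : Fin q → Bool) (hwn : ∀ j, ¬ i1 < j → w j = false) :
    ((univ.filter (fun z : Fin q → Bool =>
        -(a 0) ≤ Tsum q a i1 z ∧ Tsum q a i1 z < a 0)).filter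
      (fun z => (fun j => if i1 < j then z j else false) = w)).card ≤
    ((univ.filter (fun z : Fin q → Bool =>
        -(a 0) ≤ Tsum q a i z ∧ Tsum q a i z < a 0)).filter
      (fun z => (fun j => if i1 < j then z j else false) = w)).card := by
  have hai1' : a i1 ≠ 0 := ne_of_gt hai1
  have hai' : a i ≠ 0 := ne_of_gt hai
  set R : ℝ := ∑ j ∈ univ.filter (fun j : Fin q => i1 < j), a j * pm (w j) with hR
  set b : ℝ := a i1 / a i with hb
  have hbpos : 0 < b := div_pos hai1 hai
  have hb1 : b ≤ 1 := (div_le_one hai).mpr hmono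
  have hins1 : univ.filter (fun j : Fin q => j ≤ i1) = insert i1 (univ.filter (fun j : Fin q => j ≤ i)) := by
    ext j
    simp only [Finset.mem_insert, Finset.mem_filter, Finset.mem_univ, true_and,
      Fin.le_def, Fin.ext_iff]
    omega
  have hnm1 : i1 ∉ (univ.filter (fun j : Fin q => j ≤ i)) := by
    simp only [Finset.mem_filter, Finset.mem_univ, true_and, Fin.le_def]
    omega
  have hins2 : univ.filter (fun j : Fin q => i < j)
      = insert i1 (univ.filter (fun j : Fin q => i1 < j)) := by
    ext j
    simp only [Finset.mem_insert, Finset.mem_filter, Finset.mem_univ, true_and,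
      Fin.lt_def, Fin.ext_iff]
    omega
  have hnm2 : i1 ∉ univ.filter (fun j : Fin q => i1 < j) := by
    simp only [Finset.mem_filter, Finset.mem_univ, true_and, Fin.lt_def]
    omega
  have hTs : ∀ (z : Fin q → Bool) (c : Bool),
      ((fun j => if i1 < j then z j else false) = w) → z i1 = c →
      Tsum q a i1 z = a 0 * ((∑ j ∈ univ.filter (fun j : Fin q => j ≤ i), pm (z j)) + (pm c + R / a i1)) ∧
      Tsum q a i z = a 0 * ((∑ j ∈ univ.filter (fun j : Fin q => j ≤ i), pm (z j)) + b * (pm c + R / a i1)) := by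
    intro z c htp hc
    have hRz : ∑ j ∈ univ.filter (fun j : Fin q => i1 < j), a j * pm (z j) = R := by
      rw [hR]
      apply Finset.sum_congr rfl
      intro j hj
      rw [Finset.mem_filter] at hj
      have := congrFun htp j
      rw [if_pos hj.2] at this
      rw [this]
    constructor
    · rw [Tsum, hins1, Finset.sum_insert hnm1, hRz, hc]
      field_simp
      ring
    · rw [Tsum, hins2, Finset.sum_insert hnm2, hRz, hc, hb]
      field_simp
  have hiff : ∀ u : ℝ, (-(a 0) ≤ a 0 * u ∧ a 0 * u < a 0) ↔ (-1 ≤ u ∧ u < 1) := by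
    intro u
    constructor <;> rintro ⟨h1, h2⟩ <;> constructor <;> nlinarith
  rw [Finset.filter_filter, Finset.filter_filter]
  have e1 : (univ.filter (fun z : Fin q → Bool =>
        (-(a 0) ≤ Tsum q a i1 z ∧ Tsum q a i1 z < a 0) ∧
          (fun j => if i1 < j then z j else false) = w)).card
      = (univ.filter (fun z : Fin q → Bool =>
        ((-(a 0) ≤ Tsum q a i1 z ∧ Tsum q a i1 z < a 0) ∧
          (fun j => if i1 < j then z j else false) = w) ∧ z i1 = true)).card
        + (univ.filter (fun z : Fin q → Bool =>
        ((-(a 0) ≤ Tsum q a i1 z ∧ Tsum q a i1 z < a 0) ∧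
          (fun j => if i1 < j then z j else false) = w) ∧ z i1 = false)).card := by
    have h1 := Finset.card_filter_add_card_filter_not
      (s := univ.filter (fun z : Fin q → Bool =>
        (-(a 0) ≤ Tsum q a i1 z ∧ Tsum q a i1 z < a 0) ∧
          (fun j => if i1 < j then z j else false) = w))
      (p := fun z : Fin q → Bool => z i1 = true)
    rw [Finset.filter_filter] at h1
    have h2 : (univ.filter (fun z : Fin q → Bool =>
        ((-(a 0) ≤ Tsum q a i1 z ∧ Tsum q a i1 z < a 0) ∧
          (fun j => if i1 < j then z j else false) = w) ∧ ¬ z i1 = true))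
        = univ.filter (fun z : Fin q → Bool =>
        ((-(a 0) ≤ Tsum q a i1 z ∧ Tsum q a i1 z < a 0) ∧
          (fun j => if i1 < j then z j else false) = w) ∧ z i1 = false) := by
      apply Finset.filter_congr
      intro z _
      simp [Bool.not_eq_true]
    rw [Finset.filter_filter, h2] at h1
    exact h1.symm
  have e2 : (univ.filter (fun z : Fin q → Bool =>
        (-(a 0) ≤ Tsum q a i z ∧ Tsum q a i z < a 0) ∧
          (fun j => if i1 < j then z j else false) = w)).card
      = (univ.filter (fun z : Fin q → Bool =>
        ((-(a 0) ≤ Tsum q a i z ∧ Tsum q a i z < a 0) ∧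
          (fun j => if i1 < j then z j else false) = w) ∧ z i1 = true)).card
        + (univ.filter (fun z : Fin q → Bool =>
        ((-(a 0) ≤ Tsum q a i z ∧ Tsum q a i z < a 0) ∧
          (fun j => if i1 < j then z j else false) = w) ∧ z i1 = false)).card := by
    have h1 := Finset.card_filter_add_card_filter_not
      (s := univ.filter (fun z : Fin q → Bool =>
        (-(a 0) ≤ Tsum q a i z ∧ Tsum q a i z < a 0) ∧
          (fun j => if i1 < j then z j else false) = w))
      (p := fun z : Fin q → Bool => z i1 = true)
    rw [Finset.filter_filter] at h1
    have h2 : (univ.filter (fun z : Fin q → Bool =>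
        ((-(a 0) ≤ Tsum q a i z ∧ Tsum q a i z < a 0) ∧
          (fun j => if i1 < j then z j else false) = w) ∧ ¬ z i1 = true))
        = univ.filter (fun z : Fin q → Bool =>
        ((-(a 0) ≤ Tsum q a i z ∧ Tsum q a i z < a 0) ∧
          (fun j => if i1 < j then z j else false) = w) ∧ z i1 = false) := by
      apply Finset.filter_congr
      intro z _
      simp [Bool.not_eq_true]
    rw [Finset.filter_filter, h2] at h1
    exact h1.symm
  rw [e1, e2]
  have hpiece : ∀ (c : Bool) (ii : Fin q) (y : ℝ),
      (∀ z : Fin q → Bool, ((fun j => if i1 < j then z j else false) = w) → z i1 = c →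
        Tsum q a ii z = a 0 * ((∑ j ∈ univ.filter (fun j : Fin q => j ≤ i), pm (z j)) + y)) →
      (univ.filter (fun z : Fin q → Bool =>
        ((-(a 0) ≤ Tsum q a ii z ∧ Tsum q a ii z < a 0) ∧
          (fun j => if i1 < j then z j else false) = w) ∧ z i1 = c)).card
      = ((univ.filter (fun j : Fin q => j ≤ i)).powerset.filter
          (fun A => -1 ≤ 2*(A.card:ℝ) - (((univ.filter (fun j : Fin q => j ≤ i)).card):ℝ) + y ∧
            2*(A.card:ℝ) - (((univ.filter (fun j : Fin q => j ≤ i)).card):ℝ) + y < 1)).card := by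
    intro c ii y hT
    rw [← piece_card q i i1 hi1 w hwn c y]
    congr 1
    apply Finset.filter_congr
    intro z _
    constructor
    · rintro ⟨⟨hE, htp⟩, hc⟩
      rw [hT z htp hc] at hE
      exact ⟨htp, hc, (hiff _).mp hE⟩
    · rintro ⟨htp, hc, hE⟩
      exact ⟨⟨by rw [hT z htp hc]; exact (hiff _).mpr hE, htp⟩, hc⟩
  rw [hpiece true i1 (pm true + R / a i1) (fun z htp hc => (hTs z true htp hc).1),
      hpiece false i1 (pm false + R / a i1) (fun z htp hc => (hTs z false htp hc).1),
      hpiece true i (b * (pm true + R / a i1)) (fun z htp hc => (hTs z true htp hc).2),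
      hpiece false i (b * (pm false + R / a i1)) (fun z htp hc => (hTs z false htp hc).2)]
  exact Nat.add_le_add
    (powfilter_le (univ.filter (fun j : Fin q => j ≤ i)) b (pm true + R / a i1) hbpos hb1)
    (powfilter_le (univ.filter (fun j : Fin q => j ≤ i)) b (pm false + R / a i1) hbpos hb1)

/-- Claim 1: if `a_1 ≥ a_2 ≥ … ≥ a_q > 0`, then `p_i` is monotone
decreasing in `i`, i.e. `p_{i+1} ≤ p_i` for every `i ∈ {1,…,q−1}`. -/
theorem statement15 (q : ℕ) [NeZero q] (a : Fin q → ℝ)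
    (hpos : ∀ i, 0 < a i) (hanti : ∀ i j : Fin q, i ≤ j → a j ≤ a i) :
    ∀ i : Fin q, ∀ h : (i : ℕ) + 1 < q, pseq q a ⟨(i : ℕ) + 1, h⟩ ≤ pseq q a i := by
  intro i h
  set i1 : Fin q := ⟨(i : ℕ) + 1, h⟩ with hi1def
  have hi1 : (i:ℕ) + 1 = (i1:ℕ) := rfl
  have hile : i ≤ i1 := by rw [Fin.le_def]; omega
  have main : (univ.filter (fun z : Fin q → Bool =>
      -(a 0) ≤ Tsum q a i1 z ∧ Tsum q a i1 z < a 0)).card ≤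
      (univ.filter (fun z : Fin q → Bool =>
      -(a 0) ≤ Tsum q a i z ∧ Tsum q a i z < a 0)).card := by
    have H1 : ∀ z ∈ univ.filter (fun z : Fin q → Bool =>
        -(a 0) ≤ Tsum q a i1 z ∧ Tsum q a i1 z < a 0),
        (fun j => if i1 < j then z j else false) ∈
          univ.filter (fun w : Fin q → Bool => ∀ j, ¬ i1 < j → w j = false) := by
      intro z _
      simp only [Finset.mem_filter, Finset.mem_univ, true_and]
      intro j hj
      rw [if_neg hj]
    have H2 : ∀ z ∈ univ.filter (fun z : Fin q → Bool =>
        -(a 0) ≤ Tsum q a i z ∧ Tsum q a i z < a 0),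
        (fun j => if i1 < j then z j else false) ∈
          univ.filter (fun w : Fin q → Bool => ∀ j, ¬ i1 < j → w j = false) := by
      intro z _
      simp only [Finset.mem_filter, Finset.mem_univ, true_and]
      intro j hj
      rw [if_neg hj]
    rw [Finset.card_eq_sum_card_fiberwise H1, Finset.card_eq_sum_card_fiberwise H2]
    apply Finset.sum_le_sum
    intro w hw
    rw [Finset.mem_filter] at hw
    exact perw q a i i1 hi1 (hpos 0) (hpos i) (hpos i1) (hanti i i1 hile) w hw.2
  rw [pseq, pseq]
  gcongr
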